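/- For any increment array t of size s with period π(t), and for all agents 1 ≤ i ≤ j ≤ n: C(i, t) = C(j, t) if and only if there exists an integer r with 0 ≤ r ≤ (n − i)·s / (n·π(t)) such that j = i + r·(n·π(t)/s). -/

import Mathlib

namespace NDCA

/-- `t` is an increment array (IA) of size `s` for `n` agents:
a tuple of non-negative integers of length `s` with sum `n - s`. -/
def IsIA (n s : ℕ) (t : List ℕ) : Prop :=
  t.length = s ∧ t.sum = n - s

/-- Cumulative increment `φ_i` (1-indexed): `φ_1 = 0`, and
`φ_i = Σ_{k=0}^{i-2} (t_k + 1)` for `2 ≤ i`. -/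
def phi (t : List ℕ) (i : ℕ) : ℕ := (t.take (i - 1)).sum + (i - 1)

/-- The coalition generated by increment array `t` from starting agent `x`:
`C(x,t) = { ((x - 1 + φ_i) mod n) + 1 : 1 ≤ i ≤ s }`. -/
def coal (n x : ℕ) (t : List ℕ) : Finset ℕ :=
  (Finset.Icc 1 t.length).image (fun i => (x - 1 + phi t i) % n + 1)

/-- The collection of coalitions generated by `t` as the starting agent
ranges over `{1, …, n}`. -/
def gen (n : ℕ) (t : List ℕ) : Finset (Finset ℕ) :=
  (Finset.Icc 1 n).image (fun x => coal n x t)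

/-- `u` is a circular shift of `t`: `u = ⟨t_k, …, t_{s-1}, t_0, …, t_{k-1}⟩`
for some `0 ≤ k ≤ s - 1`. -/
def ShiftEquiv (t u : List ℕ) : Prop :=
  ∃ k, k < t.length ∧ u = t.rotate k

/-- `p` is a period of `t`: `1 ≤ p`, `p ∣ |t|`, and `t` consists of
`|t|/p` identical copies of its first `p` entries. -/
def IsPeriodOf (t : List ℕ) (p : ℕ) : Prop :=
  1 ≤ p ∧ p ∣ t.length ∧ t = (List.replicate (t.length / p) (t.take p)).flatten

/-- The period `π(t)`: the smallest `p` that is a period of `t`. -/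
noncomputable def period (t : List ℕ) : ℕ := sInf {p | IsPeriodOf t p}

/-- For any increment array `t` of size `s` with period
`π(t)`, and all agents `1 ≤ i ≤ j ≤ n`:  `C(i,t) = C(j,t)` iff there exists
`0 ≤ r ≤ (n-i)·s / (n·π(t))` with `j = i + r·(n·π(t)/s)`. -/


lemma getElem_idx_congr {α : Type*} (l : List α) {i j : ℕ} (h : i = j) (hi : i < l.length) :
    l[i] = l[j]'(h ▸ hi) := by subst h; rfl

lemma length_flatten_replicate {α : Type*} (q : ℕ) (b : List α) :
    (List.replicate q b).flatten.length = q * b.length := by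
  simp [List.length_flatten, List.map_replicate, List.sum_replicate]

lemma getElem_flatten_replicate {α : Type*} (q : ℕ) (b : List α) (hb : 0 < b.length) (i : ℕ)
    (h : i < (List.replicate q b).flatten.length) :
    (List.replicate q b).flatten[i] = b[i % b.length]'(Nat.mod_lt _ hb) := by
  induction q generalizing i with
  | zero => simp at h
  | succ q ih =>
    rw [length_flatten_replicate] at h
    have heq : (List.replicate (q+1) b).flatten = b ++ (List.replicate q b).flatten := by
      rw [List.replicate_succ, List.flatten_cons]
    rw [List.getElem_of_eq heq]
    by_cases hib : i < b.length
    · rw [List.getElem_append_left hib]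
      exact getElem_idx_congr _ (Nat.mod_eq_of_lt hib).symm _
    · push_neg at hib
      rw [List.getElem_append_right hib]
      have h2 : i - b.length < (List.replicate q b).flatten.length := by
        rw [length_flatten_replicate]
        have : (q+1) * b.length = q * b.length + b.length := by ring
        omega
      rw [ih _ h2]
      exact getElem_idx_congr _ (Nat.mod_eq_sub_mod hib).symm _

lemma rotate_of_isPeriod {t : List ℕ} {p : ℕ} (h : IsPeriodOf t p) : t.rotate p = t := by
  obtain ⟨hp1, hpd, hrep⟩ := h
  rcases Nat.eq_zero_or_pos t.length with h0 | hlen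
  · rw [List.length_eq_zero_iff] at h0; simp [h0]
  have hps : p ≤ t.length := Nat.le_of_dvd hlen hpd
  have hblen : (t.take p).length = p := by rw [List.length_take]; omega
  have hq1 : 1 ≤ t.length / p := Nat.one_le_div_iff (by omega) |>.mpr hps
  have hq : t.length / p = (t.length / p - 1) + 1 := by omega
  have hrep' : t = t.take p ++ (List.replicate (t.length / p - 1) (t.take p)).flatten := by
    conv_lhs => rw [hrep, hq, List.replicate_succ, List.flatten_cons]
  have hdrop : t.drop p = (List.replicate (t.length / p - 1) (t.take p)).flatten := by
    conv_lhs => rw [hrep']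
    rw [List.drop_left' hblen]
  rw [List.rotate_eq_drop_append_take hps, hdrop]
  conv_rhs => rw [hrep, hq, List.replicate_succ', List.flatten_append]
  simp

lemma getElem_mod_of_rotate {t : List ℕ} {g : ℕ} (hg : 1 ≤ g) (hrot : t.rotate g = t)
    (i : ℕ) (h : i < t.length) (h2 : i % g < t.length) : t[i] = t[i % g] := by
  induction i using Nat.strong_induction_on with
  | _ i ih =>
    by_cases hig : i < g
    · exact getElem_idx_congr _ (Nat.mod_eq_of_lt hig).symm _
    · push_neg at hig
      have hsub : i - g < t.length := by omega
      have hrl : i - g < (t.rotate g).length := by simp; omega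
      have e1 := List.getElem_rotate t g (i - g) hrl
      have e2 : (t.rotate g)[i - g]'hrl = t[i - g] := List.getElem_of_eq hrot _
      have e3 : (i - g + g) % t.length = i := by
        rw [Nat.mod_eq_of_lt (by omega)]; omega
      have key : t[i] = t[i - g] := by
        rw [← e2, e1]; exact (getElem_idx_congr _ e3 _).symm
      rw [key, ih (i - g) (by omega) hsub (by
        rw [← Nat.mod_eq_sub_mod hig]; exact h2)]
      exact getElem_idx_congr _ (Nat.mod_eq_sub_mod hig).symm _

lemma isPeriod_of_rotate {t : List ℕ} {g : ℕ} (hg : 1 ≤ g) (hgd : g ∣ t.length)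
    (hrot : t.rotate g = t) : IsPeriodOf t g := by
  refine ⟨hg, hgd, ?_⟩
  rcases Nat.eq_zero_or_pos t.length with h0 | hpos
  · have : t = [] := List.length_eq_zero_iff.mp h0
    simp [this]
  have hgle : g ≤ t.length := Nat.le_of_dvd hpos hgd
  have htg : (t.take g).length = g := by rw [List.length_take]; omega
  have hlen : t.length = (List.replicate (t.length / g) (t.take g)).flatten.length := by
    rw [length_flatten_replicate, htg, Nat.div_mul_cancel hgd]
  refine List.ext_getElem hlen ?_
  intro m h1 h2
  rw [getElem_flatten_replicate _ _ (by omega)]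
  have e1 : (t.take g)[m % (t.take g).length]'(Nat.mod_lt _ (by omega)) = t[m % g]'(by
      have : m % g < g := Nat.mod_lt _ (by omega); omega) := by
    have : m % (t.take g).length = m % g := by rw [htg]
    rw [getElem_idx_congr _ this, List.getElem_take]
  rw [e1]
  exact getElem_mod_of_rotate hg hrot m h1 (by have : m % g < g := Nat.mod_lt _ (by omega); omega)

lemma rotate_mul {t : List ℕ} {g : ℕ} (hrot : t.rotate g = t) (c : ℕ) :
    t.rotate (c * g) = t := by
  induction c with
  | zero => simp
  | succ c ih => rw [Nat.succ_mul, ← List.rotate_rotate, ih, hrot]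

lemma rot_of_rot_add {t : List ℕ} {a b : ℕ} (h : t.rotate (a + b) = t)
    (hb : t.rotate b = t) : t.rotate a = t := by
  rcases Nat.eq_zero_or_pos t.length with h0 | hpos
  · rw [List.length_eq_zero_iff] at h0; simp [h0]
  have hdvd : t.length ∣ b + (t.length - b % t.length) := by
    refine ⟨b / t.length + 1, ?_⟩
    have h3 := Nat.div_add_mod b t.length
    have h4 : b % t.length < t.length := Nat.mod_lt _ hpos
    have h5 : t.length * (b / t.length + 1) = t.length * (b / t.length) + t.length := by ring
    omega
  have hrotmul : ∀ (u : List ℕ), u.length = t.length → u.rotate (b + (t.length - b % t.length)) = u := by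
    intro u hu
    obtain ⟨k, hk⟩ := hdvd
    rw [← List.rotate_mod, hu, hk, Nat.mul_mod_right]
    simp
  have key : (t.rotate a).rotate (b + (t.length - b % t.length)) = t.rotate (t.length - b % t.length) := by
    have h6 : (t.rotate a).rotate b = t := by rw [List.rotate_rotate]; exact h
    rw [← List.rotate_rotate, h6]
  have key2 : t.rotate (t.length - b % t.length) = t := by
    have h7 : t.rotate (b + (t.length - b % t.length)) = t := hrotmul t rfl
    rw [← List.rotate_rotate, hb] at h7
    exact h7
  rw [hrotmul (t.rotate a) (by simp)] at key
  rw [key, key2]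

lemma rotate_gcd {t : List ℕ} : ∀ {a b : ℕ}, t.rotate a = t → t.rotate b = t →
    t.rotate (Nat.gcd a b) = t := by
  intro a b
  induction a, b using Nat.gcd.induction with
  | H0 n => intro _ hb; simpa
  | H1 m n hm ih =>
    intro hma hnb
    rw [Nat.gcd_rec]
    refine ih ?_ hma
    have hmul : t.rotate ((n / m) * m) = t := rotate_mul hma _
    have h8 : n % m + (n / m) * m = n := Nat.mod_add_div' n m
    exact rot_of_rot_add (by rw [h8]; exact hnb) hmul

lemma isPeriod_length {t : List ℕ} (h : 1 ≤ t.length) : IsPeriodOf t t.length := by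
  refine ⟨h, dvd_rfl, ?_⟩
  rw [Nat.div_self (by omega), List.replicate_one, List.take_of_length_le le_rfl]
  simp

lemma period_isPeriod {t : List ℕ} (h : 1 ≤ t.length) : IsPeriodOf t (period t) := by
  have hne : Set.Nonempty {p | IsPeriodOf t p} := ⟨t.length, isPeriod_length h⟩
  exact Nat.sInf_mem hne

lemma period_dvd_of_rotate {t : List ℕ} (h : 1 ≤ t.length) {r : ℕ}
    (hrot : t.rotate r = t) : period t ∣ r := by
  have hper := period_isPeriod h
  obtain ⟨hp1, hpd, _⟩ := hper
  rcases Nat.eq_zero_or_pos r with h0 | hr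
  · simp [h0]
  have hg1 : 0 < Nat.gcd (period t) r := Nat.gcd_pos_of_pos_right _ hr
  have hgrot : t.rotate (Nat.gcd (period t) r) = t :=
    rotate_gcd (rotate_of_isPeriod (period_isPeriod h)) hrot
  have hgper : IsPeriodOf t (Nat.gcd (period t) r) :=
    isPeriod_of_rotate hg1 ((Nat.gcd_dvd_left _ _).trans hpd) hgrot
  have hle : period t ≤ Nat.gcd (period t) r := Nat.sInf_le (by exact hgper)
  have hge : Nat.gcd (period t) r ≤ period t := Nat.le_of_dvd (by omega) (Nat.gcd_dvd_left _ _)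
  have heq : Nat.gcd (period t) r = period t := by omega
  rw [← heq]
  exact Nat.gcd_dvd_right _ _


/-- The finite set of cumulative increments, viewed in `ZMod n`. -/
def Fs (n : ℕ) (t : List ℕ) : Finset (ZMod n) :=
  (Finset.range t.length).image (fun m => ((phi t (m + 1) : ℕ) : ZMod n))

lemma phi_one (t : List ℕ) : phi t 1 = 0 := by simp [phi]

lemma phi_succ {t : List ℕ} {m : ℕ} (h : m < t.length) :
    phi t (m + 2) = phi t (m + 1) + (t[m] + 1) := by
  simp only [phi, Nat.add_sub_cancel]
  rw [show m + 2 - 1 = m + 1 by omega, List.sum_take_succ _ _ h]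
  omega

lemma phi_mono (t : List ℕ) {i i' : ℕ} (h : i ≤ i') : phi t i ≤ phi t i' := by
  simp only [phi]
  have : (t.take (i' - 1)).sum = (t.take (i - 1)).sum + ((t.drop (i - 1)).take (i' - 1 - (i - 1))).sum := by
    rw [← List.sum_append, ← List.take_add, show (i - 1) + (i' - 1 - (i - 1)) = i' - 1 by omega]
  omega

lemma phi_total {n s : ℕ} {t : List ℕ} (hlen : t.length = s) (hsum : t.sum = n - s)
    (hsn : s ≤ n) : phi t (s + 1) = n := by
  simp only [phi, Nat.add_sub_cancel]
  rw [← hlen, List.take_of_length_le le_rfl, hlen]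
  omega

lemma phi_lt {n s : ℕ} {t : List ℕ} (hlen : t.length = s) (hsum : t.sum = n - s)
    (hsn : s ≤ n) {m : ℕ} (hm : m < s) : phi t (m + 1) < n := by
  have h1 : phi t (m + 1) < phi t (m + 2) := by
    rw [phi_succ (by omega : m < t.length)]; omega
  have h2 : phi t (m + 2) ≤ phi t (s + 1) := phi_mono t (by omega)
  rw [phi_total hlen hsum hsn] at h2
  omega

lemma mem_Fs {n : ℕ} {t : List ℕ} {x : ZMod n} :
    x ∈ Fs n t ↔ ∃ m < t.length, x = ((phi t (m + 1) : ℕ) : ZMod n) := by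
  simp [Fs, eq_comm]

lemma zero_mem_Fs {n : ℕ} {t : List ℕ} (h : 0 < t.length) : (0 : ZMod n) ∈ Fs n t := by
  rw [mem_Fs]
  exact ⟨0, h, by rw [phi_one]; simp⟩

lemma not_mem_Fs_between {n s : ℕ} {t : List ℕ} (hn : 1 ≤ n) (hlen : t.length = s)
    (hsum : t.sum = n - s) (hsn : s ≤ n) {m u : ℕ} (hm : m < s)
    (h1 : phi t (m + 1) < u) (h2 : u < phi t (m + 2)) :
    ((u : ℕ) : ZMod n) ∉ Fs n t := by
  intro hmem
  rw [mem_Fs] at hmem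
  obtain ⟨m', hm', heq⟩ := hmem
  rw [hlen] at hm'
  have hun : u < n := by
    have : phi t (m + 2) ≤ phi t (s + 1) := phi_mono t (by omega)
    rw [phi_total hlen hsum hsn] at this
    omega
  have hpn : phi t (m' + 1) < n := phi_lt hlen hsum hsn hm'
  haveI : NeZero n := ⟨by omega⟩
  have heqn : u = phi t (m' + 1) := by
    have := congrArg ZMod.val heq
    rwa [ZMod.val_cast_of_lt hun, ZMod.val_cast_of_lt hpn] at this
  by_cases hcmp : m' ≤ m
  · have := phi_mono t (show m' + 1 ≤ m + 1 by omega)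
    omega
  · have := phi_mono t (show m + 2 ≤ m' + 1 by omega)
    omega

/-- Distance to next element of `Fs` (only meaningful for elements of `Fs`). -/
noncomputable def gam (n : ℕ) (t : List ℕ) (x : ZMod n) : ℕ :=
  sInf {ℓ : ℕ | 0 < ℓ ∧ x + ((ℓ : ℕ) : ZMod n) ∈ Fs n t}

lemma succ_phi {n s : ℕ} {t : List ℕ} (hn : 1 ≤ n) (hlen : t.length = s)
    (hsum : t.sum = n - s) (hsn : s ≤ n) (hs1 : 1 ≤ s) {m : ℕ} (hm : m < s) :
    ((phi t (m + 1) : ℕ) : ZMod n) + (((t[m]'(by omega) + 1 : ℕ)) : ZMod n) =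
      ((phi t ((m + 1) % s + 1) : ℕ) : ZMod n) := by
  rw [← Nat.cast_add, ← phi_succ (by omega : m < t.length)]
  by_cases hms : m + 1 < s
  · rw [Nat.mod_eq_of_lt hms]
  · have hm1 : m + 1 = s := by omega
    rw [hm1, Nat.mod_self, phi_one]
    rw [show m + 2 = s + 1 by omega, phi_total hlen hsum hsn]
    simp

lemma gam_eq {n s : ℕ} {t : List ℕ} (hn : 1 ≤ n) (hlen : t.length = s)
    (hsum : t.sum = n - s) (hsn : s ≤ n) (hs1 : 1 ≤ s) {m : ℕ} (hm : m < s) :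
    gam n t (((phi t (m + 1) : ℕ) : ZMod n)) = t[m]'(by omega) + 1 := by
  set S := {ℓ : ℕ | 0 < ℓ ∧ ((phi t (m + 1) : ℕ) : ZMod n) + ((ℓ : ℕ) : ZMod n) ∈ Fs n t}
    with hS
  have hmemS : t[m]'(by omega) + 1 ∈ S := by
    refine ⟨by omega, ?_⟩
    rw [succ_phi hn hlen hsum hsn hs1 hm]
    exact mem_Fs.mpr ⟨(m + 1) % s, by
      have : (m + 1) % s < s := Nat.mod_lt _ (by omega); omega, rfl⟩
  have hlow : ∀ j ∈ S, j ≥ t[m]'(by omega) + 1 := by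
    intro j hj
    by_contra hlt
    push_neg at hlt
    obtain ⟨hj0, hjF⟩ := hj
    rw [← Nat.cast_add] at hjF
    refine not_mem_Fs_between hn hlen hsum hsn hm ?_ ?_ hjF
    · omega
    · rw [phi_succ (by omega : m < t.length)]; omega
  have h1 : sInf S ≤ t[m]'(by omega) + 1 := Nat.sInf_le hmemS
  have h2 : sInf S ∈ S := Nat.sInf_mem ⟨_, hmemS⟩
  have h3 := hlow _ h2
  have : sInf S = t[m]'(by omega) + 1 := by omega
  rw [gam, ← hS, this]

lemma gam_shift {n : ℕ} {t : List ℕ} {c : ZMod n}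
    (hmem : ∀ x, x ∈ Fs n t ↔ x + c ∈ Fs n t) (x : ZMod n) :
    gam n t (x + c) = gam n t x := by
  unfold gam
  congr 1
  ext ℓ
  have : x + c + ((ℓ : ℕ) : ZMod n) = (x + ((ℓ : ℕ) : ZMod n)) + c := by ring
  simp only [Set.mem_setOf_eq, this]
  exact and_congr_right fun _ => (hmem _).symm

lemma sum_take_window {t : List ℕ} {p m : ℕ} (hrot : t.rotate p = t) (hp : p ≤ t.length)
    (h : m + p ≤ t.length) :
    (t.take (m + p)).sum = (t.take p).sum + (t.take m).sum := by
  have hdt : t.take (t.length - p) = t.drop p := by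
    have happ : t.drop p ++ t.take p = t := by
      rw [← List.rotate_eq_drop_append_take hp, hrot]
    have h2 : (t.drop p ++ t.take p).take (t.length - p) = t.drop p :=
      List.take_left' (by rw [List.length_drop])
    rwa [happ] at h2
  have hsplit : t.take (p + m) = t.take p ++ (t.drop p).take m := List.take_add
  have hdm : (t.drop p).take m = t.take m := by
    rw [← hdt, List.take_take, min_eq_left (by omega)]
  rw [show m + p = p + m by omega, hsplit, List.sum_append, hdm]

lemma phi_window {t : List ℕ} {p m : ℕ} (hrot : t.rotate p = t) (hp : p ≤ t.length)
    (h : m + p ≤ t.length) :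
    phi t (m + p + 1) = phi t (m + 1) + ((t.take p).sum + p) := by
  simp only [phi, Nat.add_sub_cancel]
  rw [sum_take_window hrot hp h]
  omega

lemma phi_window_gen {t : List ℕ} {p : ℕ} (hrot : t.rotate p = t) (hp : p ≤ t.length) :
    ∀ (a : ℕ) {m : ℕ}, m + a * p ≤ t.length →
    phi t (m + a * p + 1) = phi t (m + 1) + a * ((t.take p).sum + p) := by
  intro a
  induction a with
  | zero => intro m _; simp
  | succ a ih =>
    intro m hmp
    have h1 : m + (a + 1) * p = (m + a * p) + p := by ring
    rw [h1, phi_window hrot hp (by omega), ih (by omega)]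
    ring

/-- The stride `n·π(t)/s`. -/
noncomputable def stride (n : ℕ) (t : List ℕ) : ℕ := (t.take (period t)).sum + period t

section Main

variable {n s : ℕ} {t : List ℕ}

lemma period_pos (hlen : t.length = s) (hs1 : 1 ≤ s) : 1 ≤ period t :=
  (period_isPeriod (by omega)).1

lemma period_dvd (hlen : t.length = s) (hs1 : 1 ≤ s) : period t ∣ s :=
  hlen ▸ (period_isPeriod (by omega)).2.1

lemma period_le (hlen : t.length = s) (hs1 : 1 ≤ s) : period t ≤ s :=
  Nat.le_of_dvd (by omega) (period_dvd hlen hs1)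

lemma stride_mul (hlen : t.length = s) (hsum : t.sum = n - s) (hsn : s ≤ n) (hs1 : 1 ≤ s) :
    (s / period t) * stride n t = n := by
  have hper := period_isPeriod (t := t) (by omega)
  obtain ⟨hp1, hpd, hrep⟩ := hper
  have hqsum : (s / period t) * (t.take (period t)).sum = t.sum := by
    conv_rhs => rw [hrep]
    rw [List.sum_flatten, List.map_replicate, List.sum_replicate, smul_eq_mul, hlen]
  have hqp : (s / period t) * period t = s := Nat.div_mul_cancel (period_dvd hlen hs1)
  rw [stride, Nat.mul_add, hqsum, hqp]
  omega

lemma stride_pos (hlen : t.length = s) (hs1 : 1 ≤ s) : 1 ≤ stride n t := by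
  have := period_pos hlen hs1
  rw [stride]; omega

lemma shift_stride (hn : 1 ≤ n) (hlen : t.length = s) (hsum : t.sum = n - s)
    (hsn : s ≤ n) (hs1 : 1 ≤ s) :
    (Fs n t).image (· + ((stride n t : ℕ) : ZMod n)) = Fs n t := by
  have hπ1 := period_pos hlen hs1
  have hπle := period_le hlen hs1
  have hrotπ : t.rotate (period t) = t := rotate_of_isPeriod (period_isPeriod (by omega))
  have hq1 : 1 ≤ s / period t := Nat.one_le_div_iff (by omega) |>.mpr hπle
  have hqp : (s / period t) * period t = s := Nat.div_mul_cancel (period_dvd hlen hs1)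
  apply Finset.eq_of_subset_of_card_le
  · intro x hx
    obtain ⟨y, hy, rfl⟩ := Finset.mem_image.mp hx
    obtain ⟨m, hm, rfl⟩ := mem_Fs.mp hy
    rw [hlen] at hm
    by_cases hcase : m + period t < s
    · rw [← Nat.cast_add, show phi t (m + 1) + stride n t = phi t (m + period t + 1) from ?_]
      · exact mem_Fs.mpr ⟨m + period t, by omega, rfl⟩
      · rw [phi_window hrotπ (by omega) (by omega), stride]
    · push_neg at hcase
      have hkey : phi t (m + 1) = phi t ((m + period t - s) + 1)
          + (s / period t - 1) * stride n t := by
        have harith : (m + period t - s) + (s / period t - 1) * period t = m := by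
          have h2 : (s / period t - 1) * period t + period t = s := by
            have : (s / period t - 1) * period t + 1 * period t = (s / period t) * period t := by
              rw [← Nat.add_mul]; congr 1; omega
            omega
          omega
        have := phi_window_gen hrotπ (by omega) (s / period t - 1)
          (m := m + period t - s) (by omega)
        rw [harith] at this
        rw [this, stride]
      rw [← Nat.cast_add, hkey]
      have harith2 : phi t ((m + period t - s) + 1) + (s / period t - 1) * stride n t
          + stride n t = phi t ((m + period t - s) + 1) + n := by
        have h3 : (s / period t - 1) * stride n t + stride n t = n := by
          have : (s / period t - 1) * stride n t + 1 * stride n t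
              = (s / period t) * stride n t := by
            rw [← Nat.add_mul]; congr 1; omega
          rw [stride_mul hlen hsum hsn hs1] at this
          omega
        omega
      rw [harith2, Nat.cast_add, ZMod.natCast_self, add_zero]
      exact mem_Fs.mpr ⟨m + period t - s, by omega, rfl⟩
  · rw [Finset.card_image_of_injective _ (add_left_injective _)]

lemma shift_stride_mul (hn : 1 ≤ n) (hlen : t.length = s) (hsum : t.sum = n - s)
    (hsn : s ≤ n) (hs1 : 1 ≤ s) (a : ℕ) :
    (Fs n t).image (· + ((a * stride n t : ℕ) : ZMod n)) = Fs n t := by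
  induction a with
  | zero => simp
  | succ a ih =>
    have : ((a + 1) * stride n t : ℕ) = (a * stride n t) + stride n t := by ring
    rw [this, Nat.cast_add]
    have himg : (Fs n t).image (· + (((a * stride n t : ℕ) : ZMod n)
        + ((stride n t : ℕ) : ZMod n)))
        = ((Fs n t).image (· + ((a * stride n t : ℕ) : ZMod n))).image
          (· + ((stride n t : ℕ) : ZMod n)) := by
      rw [Finset.image_image]
      congr 1
      ext x
      simp [add_assoc]
    rw [himg, ih, shift_stride hn hlen hsum hsn hs1]

lemma core (hn : 1 ≤ n) (hlen : t.length = s) (hsum : t.sum = n - s)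
    (hsn : s ≤ n) (hs1 : 1 ≤ s) {c : ZMod n}
    (himg : (Fs n t).image (· + c) = Fs n t) :
    ∃ a, c = ((a * stride n t : ℕ) : ZMod n) := by
  have hmem : ∀ x, x ∈ Fs n t ↔ x + c ∈ Fs n t := by
    intro x
    constructor
    · intro hx; rw [← himg]; exact Finset.mem_image_of_mem _ hx
    · intro hx
      rw [← himg] at hx
      obtain ⟨y, hy, hxy⟩ := Finset.mem_image.mp hx
      have : y = x := add_right_cancel hxy
      rwa [← this]
  have hc : c ∈ Fs n t := by
    have h0 : (0 : ZMod n) ∈ Fs n t := zero_mem_Fs (by omega)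
    have := (hmem 0).mp h0
    simpa using this
  obtain ⟨k0, hk0, hck⟩ := mem_Fs.mp hc
  rw [hlen] at hk0
  set O : ℕ → ZMod n := fun m => ((phi t (m % s + 1) : ℕ) : ZMod n) with hO
  have hbound : ∀ m : ℕ, m % s < t.length := by
    intro m; have := Nat.mod_lt m (show 0 < s by omega); omega
  have hgam : ∀ m : ℕ, gam n t (O m) = t[m % s]'(hbound m) + 1 := by
    intro m
    exact gam_eq hn hlen hsum hsn hs1 (Nat.mod_lt _ (by omega))
  have hOstep : ∀ m : ℕ, O (m + 1) = O m + ((gam n t (O m) : ℕ) : ZMod n) := by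
    intro m
    rw [hgam m, hO]
    simp only
    rw [succ_phi hn hlen hsum hsn hs1 (Nat.mod_lt _ (by omega))]
    congr 2
    rw [Nat.mod_add_mod]
  have horb : ∀ m, O m + c = O (m + k0) := by
    intro m
    induction m with
    | zero =>
      have h1 : O 0 = 0 := by simp [hO, phi_one]
      have h2 : O k0 = c := by
        rw [hO]; simp only
        rw [Nat.mod_eq_of_lt hk0, ← hck]
      rw [h1, zero_add, Nat.zero_add, h2]
    | succ m ih =>
      have e1 : O (m + 1) + c = (O m + c) + ((gam n t (O m) : ℕ) : ZMod n) := by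
        rw [hOstep m]; ring
      have e2 : gam n t (O m) = gam n t (O (m + k0)) := by
        rw [← ih, gam_shift hmem]
      rw [e1, ih, e2, ← hOstep (m + k0)]
      congr 1
      omega
  have hrot : t.rotate k0 = t := by
    refine List.ext_getElem (by simp) ?_
    intro m h1 h2
    rw [List.getElem_rotate]
    have g2 : gam n t (O m) = gam n t (O (m + k0)) := by
      rw [← horb m, gam_shift hmem]
    rw [hgam m, hgam (m + k0)] at g2
    have e3 : m % s = m := Nat.mod_eq_of_lt (by omega)
    have e4 : (m + k0) % t.length = (m + k0) % s := by rw [hlen]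
    rw [getElem_idx_congr t e4]
    rw [getElem_idx_congr t e3] at g2
    omega
  have hdvd : period t ∣ k0 := period_dvd_of_rotate (by omega) hrot
  obtain ⟨a, ha⟩ := hdvd
  refine ⟨a, ?_⟩
  rw [hck]
  have hrotπ : t.rotate (period t) = t := rotate_of_isPeriod (period_isPeriod (by omega))
  have hπle := period_le hlen hs1
  have hwin := phi_window_gen hrotπ (by omega) a (m := 0)
    (by rw [Nat.zero_add, Nat.mul_comm, ← ha]; omega)
  rw [Nat.zero_add, Nat.zero_add, phi_one, Nat.zero_add] at hwin
  rw [show k0 + 1 = a * period t + 1 by rw [ha]; ring, hwin, stride]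

end Main

lemma coal_eq {n : ℕ} {t : List ℕ} (hn : 1 ≤ n) (x : ℕ) :
    coal n x t = ((Fs n t).image (· + ((x - 1 : ℕ) : ZMod n))).image
      (fun z : ZMod n => z.val + 1) := by
  haveI : NeZero n := ⟨by omega⟩
  rw [coal, Fs, Finset.image_image, Finset.image_image]
  have hval : ∀ i : ℕ, (((phi t i : ℕ) : ZMod n) + ((x - 1 : ℕ) : ZMod n)).val + 1
      = (x - 1 + phi t i) % n + 1 := by
    intro i
    rw [← Nat.cast_add, ZMod.val_natCast, Nat.add_comm (phi t i) (x - 1)]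
  ext u
  simp only [Finset.mem_image, Finset.mem_Icc, Finset.mem_range, Function.comp_apply]
  constructor
  · rintro ⟨i, ⟨hi1, hi2⟩, rfl⟩
    refine ⟨i - 1, by omega, ?_⟩
    rw [show i - 1 + 1 = i by omega, hval]
  · rintro ⟨m, hm, rfl⟩
    exact ⟨m + 1, ⟨by omega, by omega⟩, (hval (m + 1)).symm⟩

lemma image_add_eq_iff {n : ℕ} (A : Finset (ZMod n)) (a b : ZMod n) :
    A.image (· + a) = A.image (· + b) ↔ A.image (· + (b - a)) = A := by
  have h1 : A.image (· + b) = (A.image (· + (b - a))).image (· + a) := by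
    rw [Finset.image_image]
    congr 1
    ext x
    simp only [Function.comp_apply]
    ring
  rw [h1]
  constructor
  · intro h
    exact ((Finset.image_injective (add_left_injective a)) h).symm
  · intro h
    rw [h]

theorem stmt6 (n s : ℕ) (hn : 1 ≤ n) (hs1 : 1 ≤ s) (hsn : s ≤ n)
    (t : List ℕ) (ht : IsIA n s t)
    (i j : ℕ) (hi : 1 ≤ i) (hij : i ≤ j) (hj : j ≤ n) :
    coal n i t = coal n j t ↔
      ∃ r, r ≤ (n - i) * s / (n * period t) ∧
        j = i + r * (n * period t / s) := by
  obtain ⟨hlen, hsum⟩ := ht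
  haveI : NeZero n := ⟨by omega⟩
  have hπ1 := period_pos hlen hs1
  have hπd := period_dvd hlen hs1
  have hqD : (s / period t) * stride n t = n := stride_mul hlen hsum hsn hs1
  have hD1 : 1 ≤ stride n t := stride_pos hlen hs1
  have hnπ : n * period t = stride n t * s := by
    calc n * period t = ((s / period t) * stride n t) * period t := by rw [hqD]
    _ = stride n t * ((s / period t) * period t) := by ring
    _ = stride n t * s := by rw [Nat.div_mul_cancel hπd]
  have hstrideEq : n * period t / s = stride n t := by
    rw [hnπ, Nat.mul_div_cancel _ (by omega : 0 < s)]
  have hbound : (n - i) * s / (n * period t) = (n - i) / stride n t := by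
    rw [hnπ, Nat.mul_div_mul_right _ _ (by omega : 0 < s)]
  have hg : Function.Injective (fun z : ZMod n => z.val + 1) := by
    intro a b h
    have h' : a.val + 1 = b.val + 1 := h
    exact ZMod.val_injective n (by omega)
  have hdiff : ((j - 1 : ℕ) : ZMod n) - ((i - 1 : ℕ) : ZMod n) = ((j - i : ℕ) : ZMod n) := by
    have h1 : (j - i : ℕ) + (i - 1) = (j - 1) := by omega
    rw [← h1, Nat.cast_add]
    ring
  rw [hstrideEq, hbound, coal_eq hn i, coal_eq hn j,
    (Finset.image_injective hg).eq_iff, image_add_eq_iff, hdiff]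
  constructor
  · intro h
    obtain ⟨a, ha⟩ := core hn hlen hsum hsn hs1 h
    have hji : j - i < n := by omega
    have hvv := congrArg ZMod.val ha
    rw [ZMod.val_cast_of_lt hji, ZMod.val_natCast] at hvv
    have hDn : stride n t ∣ n := by
      have hqD' := hqD
      rw [Nat.mul_comm] at hqD'
      exact ⟨_, hqD'.symm⟩
    have hdvd : stride n t ∣ j - i := by
      rw [hvv]
      exact (Nat.dvd_mod_iff hDn).mpr ⟨a, by ring⟩
    refine ⟨(j - i) / stride n t, Nat.div_le_div_right (by omega), ?_⟩
    rw [Nat.div_mul_cancel hdvd]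
    omega
  · rintro ⟨r, hr, rfl⟩
    have : (i + r * stride n t - i : ℕ) = r * stride n t := by omega
    rw [this]
    exact shift_stride_mul hn hlen hsum hsn hs1 r

end NDCA
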